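/- Let N ≥ 1, let λ : (ZMod N) × (ZMod N) → ℂ, and let D be the matrix D (j,k) (j',k') = Σ_{α,β} λ(α,β)·Φ_{αβ}(j,k)·conj(Φ_{αβ}(j',k')) with Φ_{αβ}(j,k) = (1/√N)·(T^(α.val) * (Rᵀ)^(β.val)) j k. Then D is unitary (Dᴴ * D = 1) if and only if λ is unimodular, i.e. ‖λ x‖ = 1 for every x ∈ (ZMod N) × (ZMod N). -/

import Mathlib

open Matrix Complex

/-- The shift matrix `R` on `ℂ^(ZMod N)`: `R j k = 1` iff `j = k + 1`. -/
noncomputable def shiftM (N : ℕ) [NeZero N] : Matrix (ZMod N) (ZMod N) ℂ :=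
  fun j k => if j = k + 1 then 1 else 0

/-- The twist matrix `T` on `ℂ^(ZMod N)`: diagonal with entries `exp(2πi j/N)`. -/
noncomputable def twistM (N : ℕ) [NeZero N] : Matrix (ZMod N) (ZMod N) ℂ :=
  fun j k => if j = k then Complex.exp (2 * Real.pi * Complex.I * j.val / N) else 0

/-- Entries of the maximally entangled vectors `Φ_{αβ}`. -/
noncomputable def PhiV (N : ℕ) [NeZero N] (α β : ZMod N) (jk : ZMod N × ZMod N) : ℂ :=
  ((1 : ℂ) / Real.sqrt N) * (twistM N ^ α.val * (shiftM N)ᵀ ^ β.val) jk.1 jk.2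

/-- The operator `D = Σ_{αβ} λ(α,β) |Φ_{αβ}⟩⟨Φ_{αβ}|`. -/
noncomputable def DMat (N : ℕ) [NeZero N] (lam : ZMod N × ZMod N → ℂ) :
    Matrix (ZMod N × ZMod N) (ZMod N × ZMod N) ℂ :=
  fun p q => ∑ α : ZMod N, ∑ β : ZMod N,
    lam (α, β) * PhiV N α β p * (starRingEnd ℂ) (PhiV N α β q)

lemma twistM_eq_diagonal (N : ℕ) [NeZero N] :
    twistM N = Matrix.diagonal (fun j : ZMod N =>
      Complex.exp (2 * Real.pi * Complex.I * j.val / N)) := rfl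

lemma twist_pow_apply (N : ℕ) [NeZero N] (a : ℕ) (j k : ZMod N) :
    (twistM N ^ a) j k =
      if j = k then Complex.exp (2 * Real.pi * Complex.I * a * j.val / N) else 0 := by
  rw [twistM_eq_diagonal, Matrix.diagonal_pow]
  rcases eq_or_ne j k with h | h
  · subst h
    simp only [Matrix.diagonal_apply_eq, Pi.pow_apply, if_pos rfl, ← Complex.exp_nat_mul]
    ring_nf
    simp
  · simp [Matrix.diagonal_apply_ne _ h, h]

lemma shiftT_pow_apply (N : ℕ) [NeZero N] (b : ℕ) (j k : ZMod N) :
    ((shiftM N)ᵀ ^ b) j k = if k = j + b then 1 else 0 := by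
  induction b generalizing j k with
  | zero => simp [Matrix.one_apply, eq_comm]
  | succ b ih =>
    rw [pow_succ, Matrix.mul_apply]
    have : ∀ m : ZMod N, ((shiftM N)ᵀ ^ b) j m * (shiftM N)ᵀ m k
        = if m = j + b then (if k = m + 1 then 1 else 0) else 0 := by
      intro m
      rw [ih, Matrix.transpose_apply, shiftM]
      split <;> simp
    simp only [this, Finset.sum_ite_eq' Finset.univ, Finset.mem_univ, if_true]
    push_cast
    rw [show (j + (b : ZMod N)) + 1 = j + ((b : ZMod N) + 1) by ring]

lemma PhiV_apply (N : ℕ) [NeZero N] (α β : ZMod N) (j k : ZMod N) :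
    PhiV N α β (j, k) = if k = j + β then
      ((1 : ℂ) / Real.sqrt N) * Complex.exp (2 * Real.pi * Complex.I * α.val * j.val / N)
      else 0 := by
  rw [PhiV, Matrix.mul_apply]
  have : ∀ m : ZMod N, (twistM N ^ α.val) j m * ((shiftM N)ᵀ ^ β.val) m k
      = if m = j then (if k = j + β then
        Complex.exp (2 * Real.pi * Complex.I * α.val * j.val / N) else 0) else 0 := by
    intro m
    have hb : ((β.val : ℕ) : ZMod N) = β := by rw [ZMod.natCast_val, ZMod.cast_id]
    rw [twist_pow_apply, shiftT_pow_apply, hb]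
    rcases eq_or_ne j m with h | h
    · subst h; simp
    · simp [h, Ne.symm h]
  simp only [this, Finset.sum_ite_eq' Finset.univ, Finset.mem_univ, if_true]
  split <;> simp

lemma sum_zeta (N : ℕ) [NeZero N] (c : ℤ) :
    ∑ j : ZMod N, Complex.exp (2 * Real.pi * Complex.I * c * j.val / N)
      = if (c : ZMod N) = 0 then (N : ℂ) else 0 := by
  have hN : (N : ℂ) ≠ 0 := Nat.cast_ne_zero.mpr (NeZero.ne N)
  set ζ : ℂ := Complex.exp (2 * Real.pi * Complex.I * c / N) with hζ
  have hterm : ∀ j : ZMod N,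
      Complex.exp (2 * Real.pi * Complex.I * c * j.val / N) = ζ ^ j.val := by
    intro j
    rw [hζ, ← Complex.exp_nat_mul]
    ring_nf
  have hsum : ∑ j : ZMod N, Complex.exp (2 * Real.pi * Complex.I * c * j.val / N)
      = ∑ i ∈ Finset.range N, ζ ^ i := by
    simp only [hterm]
    rw [← Fin.sum_univ_eq_sum_range]
    refine (Fintype.sum_bijective (fun i : Fin N => ((i : ℕ) : ZMod N)) ?_ _ _ ?_).symm
    · rw [Fintype.bijective_iff_injective_and_card]
      refine ⟨fun a b hab => Fin.ext ?_, by simp⟩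
      have := congrArg ZMod.val hab
      rwa [ZMod.val_cast_of_lt a.isLt, ZMod.val_cast_of_lt b.isLt] at this
    · intro i
      rw [ZMod.val_cast_of_lt i.isLt]
  rw [hsum]
  have hζN : ζ ^ N = 1 := by
    rw [hζ, ← Complex.exp_nat_mul]
    have : (N : ℂ) * (2 * Real.pi * Complex.I * c / N) = c * (2 * Real.pi * Complex.I) := by
      field_simp
    rw [this, Complex.exp_int_mul_two_pi_mul_I]
  by_cases hdvd : (c : ZMod N) = 0
  · have : (N : ℤ) ∣ c := (ZMod.intCast_zmod_eq_zero_iff_dvd c N).mp hdvd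
    obtain ⟨m, hm⟩ := this
    have hζ1 : ζ = 1 := by
      have h3 : 2 * (Real.pi : ℂ) * Complex.I * (((N : ℤ) * m : ℤ) : ℂ) / N
          = (m : ℂ) * (2 * Real.pi * Complex.I) := by
        push_cast; field_simp
      rw [hζ, hm, h3]
      exact_mod_cast Complex.exp_int_mul_two_pi_mul_I m
    simp [hζ1, hdvd]
  · have hζ1 : ζ ≠ 1 := by
      intro h
      rw [hζ, Complex.exp_eq_one_iff] at h
      obtain ⟨n, hn⟩ := h
      have hc : (c : ℂ) = n * N := by
        field_simp at hn
        have h2 : (2 * (Real.pi : ℂ) * Complex.I : ℂ) ≠ 0 := by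
          simp [Real.pi_ne_zero, Complex.I_ne_zero]
        apply mul_left_cancel₀ h2
        linear_combination (2 * (Real.pi : ℂ) * Complex.I) * hn
      apply hdvd
      have : c = n * N := by exact_mod_cast hc
      rw [this]
      push_cast
      simp
    rw [geom_sum_eq hζ1, hζN, if_neg hdvd]
    simp

noncomputable def UMat (N : ℕ) [NeZero N] :
    Matrix (ZMod N × ZMod N) (ZMod N × ZMod N) ℂ :=
  fun p x => PhiV N x.1 x.2 p

lemma UMat_unitary (N : ℕ) [NeZero N] : (UMat N)ᴴ * UMat N = 1 := by
  have hNR : (0:ℝ) ≤ N := Nat.cast_nonneg N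
  have hNC : (N : ℂ) ≠ 0 := Nat.cast_ne_zero.mpr (NeZero.ne N)
  ext x y
  rw [Matrix.mul_apply]
  simp only [Matrix.conjTranspose_apply, UMat]
  rw [Fintype.sum_prod_type]
  have hterm : ∀ j k : ZMod N,
      star (PhiV N x.1 x.2 (j, k)) * PhiV N y.1 y.2 (j, k)
        = if k = j + x.2 then (if k = j + y.2 then
            ((1:ℂ)/(N:ℂ)) * Complex.exp (2 * Real.pi * Complex.I *
              (((y.1.val : ℤ) - (x.1.val : ℤ) : ℤ) : ℂ) * j.val / N) else 0) else 0 := by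
    intro j k
    rw [PhiV_apply, PhiV_apply]
    have hs : star ((1 : ℂ) / Real.sqrt N) = (1 : ℂ) / Real.sqrt N := by
      simp [← Complex.ofReal_one, div_eq_mul_inv]
    have he : star (Complex.exp (2 * Real.pi * Complex.I * x.1.val * j.val / N))
        = Complex.exp (-(2 * Real.pi * Complex.I * x.1.val * j.val / N)) := by
      rw [show star (Complex.exp (2 * Real.pi * Complex.I * x.1.val * j.val / N))
          = (starRingEnd ℂ) (Complex.exp (2 * Real.pi * Complex.I * x.1.val * j.val / N)) from rfl,
        ← Complex.exp_conj]
      congr 1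
      simp only [map_div₀, _root_.map_mul, map_neg, map_ofNat, Complex.conj_I,
        Complex.conj_ofReal, Complex.conj_natCast, map_natCast]
      ring
    have hss : ((1 : ℂ) / Real.sqrt N) * ((1 : ℂ) / Real.sqrt N) = (1:ℂ)/(N:ℂ) := by
      rw [div_mul_div_comm, one_mul]
      congr 1
      rw [← Complex.ofReal_mul, Real.mul_self_sqrt hNR]
      simp
    by_cases hA : k = j + x.2
    · by_cases hB : k = j + y.2
      · rw [if_pos hA, if_pos hB, if_pos hA, if_pos hB, star_mul', hs, he]
        calc (1 : ℂ) / Real.sqrt N * Complex.exp (-(2 * Real.pi * Complex.I * x.1.val * j.val / N))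
              * ((1 : ℂ) / Real.sqrt N * Complex.exp (2 * Real.pi * Complex.I * y.1.val * j.val / N))
            = ((1 : ℂ) / Real.sqrt N * ((1:ℂ)/Real.sqrt N)) *
              (Complex.exp (-(2 * Real.pi * Complex.I * x.1.val * j.val / N)) *
               Complex.exp (2 * Real.pi * Complex.I * y.1.val * j.val / N)) := by ring
          _ = ((1:ℂ)/(N:ℂ)) * Complex.exp (2 * Real.pi * Complex.I *
              (((y.1.val : ℤ) - (x.1.val : ℤ) : ℤ) : ℂ) * j.val / N) := by
              rw [hss, ← Complex.exp_add]
              congr 1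
              push_cast
              ring
      · rw [if_pos hA, if_neg hB, if_pos hA, if_neg hB, mul_zero]
    · rw [if_neg hA, if_neg hA, star_zero, zero_mul]
  simp only [hterm]
  have hin : ∀ j : ZMod N, (∑ k : ZMod N, if k = j + x.2 then (if k = j + y.2 then
      ((1:ℂ)/(N:ℂ)) * Complex.exp (2 * Real.pi * Complex.I *
        (((y.1.val : ℤ) - (x.1.val : ℤ) : ℤ) : ℂ) * j.val / N) else 0) else 0)
      = if x.2 = y.2 then ((1:ℂ)/(N:ℂ)) * Complex.exp (2 * Real.pi * Complex.I *
        (((y.1.val : ℤ) - (x.1.val : ℤ) : ℤ) : ℂ) * j.val / N) else 0 := by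
    intro j
    rw [Finset.sum_ite_eq' Finset.univ]
    simp only [Finset.mem_univ, if_true]
    by_cases h : x.2 = y.2
    · simp [h]
    · rw [if_neg, if_neg h]
      intro hc
      exact h (by exact add_left_cancel hc)
  simp only [hin]
  by_cases h2 : x.2 = y.2
  · simp only [if_pos h2, ← Finset.mul_sum]
    rw [sum_zeta N ((y.1.val : ℤ) - (x.1.val : ℤ))]
    have hcast : ((((y.1.val : ℤ) - (x.1.val : ℤ)) : ℤ) : ZMod N) = y.1 - x.1 := by
      push_cast
      rw [ZMod.natCast_val, ZMod.natCast_val, ZMod.cast_id, ZMod.cast_id]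
    rw [hcast]
    by_cases h1 : x.1 = y.1
    · rw [if_pos (by rw [h1, sub_self])]
      have hxy : x = y := Prod.ext_iff.mpr ⟨h1, h2⟩
      rw [hxy, Matrix.one_apply_eq]
      field_simp
    · rw [if_neg (fun hc => h1 (sub_eq_zero.mp hc).symm)]
      rw [Matrix.one_apply_ne (fun hc => h1 (congrArg Prod.fst hc))]
      simp
  · simp only [if_neg h2, Finset.sum_const_zero]
    rw [Matrix.one_apply_ne (fun hc => h2 (congrArg Prod.snd hc))]

lemma DMat_eq (N : ℕ) [NeZero N] (lam : ZMod N × ZMod N → ℂ) :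
    DMat N lam = UMat N * Matrix.diagonal lam * (UMat N)ᴴ := by
  ext p q
  rw [Matrix.mul_apply]
  simp only [Matrix.mul_diagonal, Matrix.conjTranspose_apply, UMat, DMat]
  rw [Fintype.sum_prod_type]
  exact Finset.sum_congr rfl fun α _ => Finset.sum_congr rfl fun β _ => by ring_nf; rfl

theorem stmt_4 (N : ℕ) [NeZero N] (hN : 1 ≤ N) (lam : ZMod N × ZMod N → ℂ) :
    (DMat N lam)ᴴ * DMat N lam = 1 ↔ ∀ x : ZMod N × ZMod N, ‖lam x‖ = 1 := by
  have hU : (UMat N)ᴴ * UMat N = 1 := UMat_unitary N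
  have hU2 : UMat N * (UMat N)ᴴ = 1 := mul_eq_one_comm.mp hU
  have hD : DMat N lam = UMat N * Matrix.diagonal lam * (UMat N)ᴴ := DMat_eq N lam
  have hDH : (DMat N lam)ᴴ = UMat N * Matrix.diagonal (fun x => star (lam x)) * (UMat N)ᴴ := by
    rw [hD, Matrix.conjTranspose_mul, Matrix.conjTranspose_mul, Matrix.conjTranspose_conjTranspose,
      Matrix.diagonal_conjTranspose, Matrix.mul_assoc]
    rfl
  have key : (DMat N lam)ᴴ * DMat N lam
      = UMat N * Matrix.diagonal (fun x => star (lam x) * lam x) * (UMat N)ᴴ := by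
    rw [hDH, hD]
    calc UMat N * Matrix.diagonal (fun x => star (lam x)) * (UMat N)ᴴ *
          (UMat N * Matrix.diagonal lam * (UMat N)ᴴ)
        = UMat N * Matrix.diagonal (fun x => star (lam x)) * ((UMat N)ᴴ * UMat N) *
          Matrix.diagonal lam * (UMat N)ᴴ := by
          simp only [Matrix.mul_assoc]
      _ = UMat N * (Matrix.diagonal (fun x => star (lam x)) * Matrix.diagonal lam) * (UMat N)ᴴ := by
          rw [hU, Matrix.mul_one]
          simp only [Matrix.mul_assoc]
      _ = UMat N * Matrix.diagonal (fun x => star (lam x) * lam x) * (UMat N)ᴴ := by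
          rw [Matrix.diagonal_mul_diagonal]
  rw [key]
  constructor
  · intro h x
    have hM : Matrix.diagonal (fun x => star (lam x) * lam x) = 1 := by
      calc Matrix.diagonal (fun x => star (lam x) * lam x)
          = ((UMat N)ᴴ * UMat N) * Matrix.diagonal (fun x => star (lam x) * lam x) *
            ((UMat N)ᴴ * UMat N) := by rw [hU, Matrix.one_mul, Matrix.mul_one]
        _ = (UMat N)ᴴ * (UMat N * Matrix.diagonal (fun x => star (lam x) * lam x) * (UMat N)ᴴ) *
            UMat N := by simp only [Matrix.mul_assoc]
        _ = (UMat N)ᴴ * (1 : Matrix _ _ ℂ) * UMat N := by rw [h]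
        _ = 1 := by rw [Matrix.mul_one, hU]
    have := congrFun (congrFun hM x) x
    rw [Matrix.diagonal_apply_eq, Matrix.one_apply_eq] at this
    have h1 : ((‖lam x‖ : ℝ) : ℂ) ^ 2 = 1 := by
      rw [← Complex.mul_conj' (lam x)]
      exact (mul_comm _ _).trans this
    have h2 : ‖lam x‖ ^ 2 = (1 : ℝ) := by exact_mod_cast h1
    nlinarith [norm_nonneg (lam x)]
  · intro h
    have hM : Matrix.diagonal (fun x => star (lam x) * lam x) = 1 := by
      have : (fun x => star (lam x) * lam x) = fun _ => (1 : ℂ) := by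
        funext x
        calc star (lam x) * lam x = lam x * (starRingEnd ℂ) (lam x) := mul_comm _ _
          _ = ((‖lam x‖ : ℝ) : ℂ) ^ 2 := Complex.mul_conj' _
          _ = 1 := by rw [h x]; norm_num
      rw [this, Matrix.diagonal_one]
    rw [hM, Matrix.mul_one, hU2]
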